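/- Let x* be a K-sparse signal with measurements b = Ax* + e, where ‖A‖₂ < 1 and A satisfies the restricted isometry property of order 3K with constant δ_{3K} < 1/√32. Then the IHT iterates x^{k+1} = H_K(x^k - Aᵀ(Ax^k - b)) starting from x^0 = 0 satisfy ‖x^k - x*‖₂ ≤ 2^{-k}‖x*‖₂ + 5‖e‖₂ for all k. -/

import Mathlib

noncomputable section

/-- A vector is `K`-sparse if it has at most `K` nonzero entries. -/
def sparse {N : ℕ} (K : ℕ) (x : EuclideanSpace ℝ (Fin N)) : Prop :=
  (Finset.univ.filter fun i => x i ≠ 0).card ≤ K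

/-- `IsHT K z x` means `x` is a result of hard thresholding `z`: a `K`-sparse vector
closest to `z` (ties broken arbitrarily). -/
def IsHT {N : ℕ} (K : ℕ) (z x : EuclideanSpace ℝ (Fin N)) : Prop :=
  sparse K x ∧ ∀ v : EuclideanSpace ℝ (Fin N), sparse K v → ‖x - z‖ ≤ ‖v - z‖

namespace IHT

variable {N M : ℕ}

def proj (B : Finset (Fin N)) (u : EuclideanSpace ℝ (Fin N)) : EuclideanSpace ℝ (Fin N) :=
  WithLp.toLp 2 (fun i => if i ∈ B then u i else 0)

def suppIn (B : Finset (Fin N)) (u : EuclideanSpace ℝ (Fin N)) : Prop :=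
  ∀ i, i ∉ B → u i = 0

lemma suppIn_sparse {B : Finset (Fin N)} {u : EuclideanSpace ℝ (Fin N)} {K : ℕ}
    (h : suppIn B u) (hK : B.card ≤ K) : sparse K u := by
  refine le_trans (Finset.card_le_card ?_) hK
  intro i hi
  simp only [Finset.mem_filter] at hi
  by_contra hb
  exact hi.2 (h i hb)

lemma sparse_suppIn {K : ℕ} {u : EuclideanSpace ℝ (Fin N)} (h : sparse K u) :
    suppIn (Finset.univ.filter fun i => u i ≠ 0) u := by
  intro i hi
  simp only [Finset.mem_filter, Finset.mem_univ, true_and, not_not] at hi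
  exact hi

lemma suppIn_mono {B C : Finset (Fin N)} {u : EuclideanSpace ℝ (Fin N)}
    (hBC : B ⊆ C) (h : suppIn B u) : suppIn C u :=
  fun i hi => h i (fun hb => hi (hBC hb))

lemma suppIn_sub {B : Finset (Fin N)} {u v : EuclideanSpace ℝ (Fin N)}
    (hu : suppIn B u) (hv : suppIn B v) : suppIn B (u - v) := by
  intro i hi
  have : (u - v) i = u i - v i := rfl
  rw [this, hu i hi, hv i hi, sub_zero]

lemma suppIn_proj (B : Finset (Fin N)) (u : EuclideanSpace ℝ (Fin N)) :
    suppIn B (proj B u) := by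
  intro i hi
  simp [proj, hi]

lemma suppIn_smul {B : Finset (Fin N)} {u : EuclideanSpace ℝ (Fin N)} (c : ℝ)
    (hu : suppIn B u) : suppIn B (c • u) := by
  intro i hi
  have : (c • u) i = c * u i := rfl
  rw [this, hu i hi, mul_zero]

lemma proj_eq_self {B : Finset (Fin N)} {u : EuclideanSpace ℝ (Fin N)}
    (h : suppIn B u) : proj B u = u := by
  ext i
  by_cases hi : i ∈ B <;> simp [proj, hi]
  exact (h i hi).symm

lemma proj_sub (B : Finset (Fin N)) (u v : EuclideanSpace ℝ (Fin N)) :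
    proj B (u - v) = proj B u - proj B v := by
  ext i
  have : (u - v) i = u i - v i := rfl
  by_cases hi : i ∈ B <;>
    simp [proj, hi, this, PiLp.sub_apply]

lemma inner_proj_left (B : Finset (Fin N)) (u v : EuclideanSpace ℝ (Fin N)) :
    inner ℝ (proj B u) v = (inner ℝ u (proj B v) : ℝ) := by
  simp only [PiLp.inner_apply, RCLike.inner_apply, starRingEnd_apply, star_trivial]
  refine Finset.sum_congr rfl fun i _ => ?_
  by_cases hi : i ∈ B <;> simp [proj, hi]

lemma inner_proj_proj (B : Finset (Fin N)) (u : EuclideanSpace ℝ (Fin N)) (w : EuclideanSpace ℝ (Fin N)) (hw : suppIn B w) :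
    inner ℝ u w = (inner ℝ (proj B u) w : ℝ) := by
  rw [inner_proj_left, proj_eq_self hw]

lemma norm_proj_le (B : Finset (Fin N)) (u : EuclideanSpace ℝ (Fin N)) :
    ‖proj B u‖ ≤ ‖u‖ := by
  have h1 : (inner ℝ (proj B u) (proj B u) : ℝ) = inner ℝ u (proj B u) :=
    (inner_proj_proj B u (proj B u) (suppIn_proj B u)).symm
  have h2 : (inner ℝ u (proj B u) : ℝ) ≤ ‖u‖ * ‖proj B u‖ := real_inner_le_norm _ _
  have h3 : (inner ℝ (proj B u) (proj B u) : ℝ) = ‖proj B u‖ ^ 2 := real_inner_self_eq_norm_sq _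
  nlinarith [norm_nonneg (proj B u), norm_nonneg u]

lemma pyth (B : Finset (Fin N)) (w : EuclideanSpace ℝ (Fin N)) :
    ‖w‖ ^ 2 = ‖proj B w‖ ^ 2 + ‖w - proj B w‖ ^ 2 := by
  have horth : (inner ℝ (proj B w) (w - proj B w) : ℝ) = 0 := by
    rw [inner_proj_left]
    have : proj B (w - proj B w) = 0 := by
      rw [proj_sub]
      have : proj B (proj B w) = proj B w := proj_eq_self (suppIn_proj B w)
      rw [this, sub_self]
    rw [this, inner_zero_right]
  have hw : w = proj B w + (w - proj B w) := by abel
  calc ‖w‖ ^ 2 = ‖proj B w + (w - proj B w)‖ ^ 2 := by rw [← hw]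
    _ = ‖proj B w‖ ^ 2 + 2 * inner ℝ (proj B w) (w - proj B w) + ‖w - proj B w‖ ^ 2 := by
        rw [norm_add_sq_real]
    _ = ‖proj B w‖ ^ 2 + ‖w - proj B w‖ ^ 2 := by rw [horth]; ring

end IHT
namespace IHT2
open Matrix
variable {N M : ℕ}

lemma toEuc_apply (A : Matrix (Fin M) (Fin N) ℝ) (v : EuclideanSpace ℝ (Fin N)) (i : Fin M) :
    Matrix.toEuclideanLin A v i = ∑ j, A i j * v j := by
  have : Matrix.toEuclideanLin A v i = (A.mulVec fun j => v j) i := rfl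
  rw [this]
  simp [Matrix.mulVec, dotProduct]

lemma adj (A : Matrix (Fin M) (Fin N) ℝ) (u : EuclideanSpace ℝ (Fin N))
    (w : EuclideanSpace ℝ (Fin M)) :
    (inner ℝ (Matrix.toEuclideanLin A u) w : ℝ) = inner ℝ u (Matrix.toEuclideanLin Aᵀ w) := by
  simp only [PiLp.inner_apply, RCLike.inner_apply, starRingEnd_apply, star_trivial,
    toEuc_apply, Matrix.transpose_apply]
  simp_rw [Finset.sum_mul, Finset.mul_sum]
  rw [Finset.sum_comm]
  exact Finset.sum_congr rfl fun j _ => Finset.sum_congr rfl fun i _ => by ring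

end IHT2

namespace IHT3
open IHT IHT2 Matrix
variable {N M K : ℕ}

lemma rip_half (A : Matrix (Fin M) (Fin N) ℝ) (δ : ℝ)
    (hRIP : ∀ z : EuclideanSpace ℝ (Fin N), sparse (3 * K) z →
      (1 - δ) * ‖z‖ ^ 2 ≤ ‖Matrix.toEuclideanLin A z‖ ^ 2 ∧
      ‖Matrix.toEuclideanLin A z‖ ^ 2 ≤ (1 + δ) * ‖z‖ ^ 2)
    (T : Finset (Fin N)) (hT : T.card ≤ 3 * K)
    (u v : EuclideanSpace ℝ (Fin N)) (hu : suppIn T u) (hv : suppIn T v) :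
    |(inner ℝ u v : ℝ) - inner ℝ (Matrix.toEuclideanLin A u) (Matrix.toEuclideanLin A v)| ≤
      δ / 2 * (‖u‖ ^ 2 + ‖v‖ ^ 2) := by
  set L := Matrix.toEuclideanLin A with hL
  have hsum : suppIn T (u + v) := by
    intro i hi
    have : (u + v) i = u i + v i := rfl
    rw [this, hu i hi, hv i hi, add_zero]
  have hdiff : suppIn T (u - v) := suppIn_sub hu hv
  have h1 := hRIP (u + v) (suppIn_sparse hsum hT)
  have h2 := hRIP (u - v) (suppIn_sparse hdiff hT)
  have e1 : ‖u + v‖ ^ 2 = ‖u‖ ^ 2 + 2 * inner ℝ u v + ‖v‖ ^ 2 := norm_add_sq_real u v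
  have e2 : ‖u - v‖ ^ 2 = ‖u‖ ^ 2 - 2 * inner ℝ u v + ‖v‖ ^ 2 := norm_sub_sq_real u v
  have e3 : ‖L (u + v)‖ ^ 2 = ‖L u‖ ^ 2 + 2 * inner ℝ (L u) (L v) + ‖L v‖ ^ 2 := by
    rw [map_add]; exact norm_add_sq_real _ _
  have e4 : ‖L (u - v)‖ ^ 2 = ‖L u‖ ^ 2 - 2 * inner ℝ (L u) (L v) + ‖L v‖ ^ 2 := by
    rw [map_sub]; exact norm_sub_sq_real _ _
  have e5 : δ * ‖u + v‖ ^ 2 + δ * ‖u - v‖ ^ 2 = 2 * δ * ‖u‖ ^ 2 + 2 * δ * ‖v‖ ^ 2 := by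
    rw [e1, e2]; ring
  rw [abs_le]
  constructor
  · linarith [h1.1, h2.2]
  · linarith [h1.2, h2.1]

lemma rip_inner (A : Matrix (Fin M) (Fin N) ℝ) (δ : ℝ) (hδ0 : 0 ≤ δ)
    (hRIP : ∀ z : EuclideanSpace ℝ (Fin N), sparse (3 * K) z →
      (1 - δ) * ‖z‖ ^ 2 ≤ ‖Matrix.toEuclideanLin A z‖ ^ 2 ∧
      ‖Matrix.toEuclideanLin A z‖ ^ 2 ≤ (1 + δ) * ‖z‖ ^ 2)
    (T : Finset (Fin N)) (hT : T.card ≤ 3 * K)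
    (u v : EuclideanSpace ℝ (Fin N)) (hu : suppIn T u) (hv : suppIn T v) :
    |(inner ℝ u v : ℝ) - inner ℝ (Matrix.toEuclideanLin A u) (Matrix.toEuclideanLin A v)| ≤
      δ * ‖u‖ * ‖v‖ := by
  set L := Matrix.toEuclideanLin A with hL
  by_cases hu0 : u = 0
  · simp [hu0, hδ0]
  by_cases hv0 : v = 0
  · simp [hv0]
  have hun : (0:ℝ) < ‖u‖ := norm_pos_iff.mpr hu0
  have hvn : (0:ℝ) < ‖v‖ := norm_pos_iff.mpr hv0
  set t : ℝ := Real.sqrt (‖v‖ / ‖u‖) with ht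
  have ht0 : 0 < t := Real.sqrt_pos.mpr (div_pos hvn hun)
  have ht2 : t ^ 2 = ‖v‖ / ‖u‖ := Real.sq_sqrt (le_of_lt (div_pos hvn hun))
  have key := rip_half A δ hRIP T hT (t • u) (t⁻¹ • v)
    (suppIn_smul t hu) (suppIn_smul t⁻¹ hv)
  have i1 : (inner ℝ (t • u) (t⁻¹ • v) : ℝ) = inner ℝ u v := by
    rw [real_inner_smul_left, real_inner_smul_right, ← mul_assoc,
      mul_inv_cancel₀ (ne_of_gt ht0), one_mul]
  have i2 : (inner ℝ (L (t • u)) (L (t⁻¹ • v)) : ℝ) = inner ℝ (L u) (L v) := by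
    rw [_root_.map_smul, _root_.map_smul, real_inner_smul_left, real_inner_smul_right, ← mul_assoc,
      mul_inv_cancel₀ (ne_of_gt ht0), one_mul]
  have n1 : ‖t • u‖ ^ 2 = ‖v‖ * ‖u‖ := by
    rw [norm_smul, mul_pow, Real.norm_eq_abs, sq_abs, ht2]
    field_simp
  have n2 : ‖t⁻¹ • v‖ ^ 2 = ‖u‖ * ‖v‖ := by
    rw [norm_smul, mul_pow, Real.norm_eq_abs, abs_inv, abs_of_pos ht0, inv_pow, ht2]
    field_simp
  rw [i1, i2, n1, n2] at key
  calc |(inner ℝ u v : ℝ) - inner ℝ (L u) (L v)| ≤ δ / 2 * (‖v‖ * ‖u‖ + ‖u‖ * ‖v‖) := key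
    _ = δ * ‖u‖ * ‖v‖ := by ring


lemma rip_proj (A : Matrix (Fin M) (Fin N) ℝ) (δ : ℝ) (hδ0 : 0 ≤ δ)
    (hRIP : ∀ z : EuclideanSpace ℝ (Fin N), sparse (3 * K) z →
      (1 - δ) * ‖z‖ ^ 2 ≤ ‖Matrix.toEuclideanLin A z‖ ^ 2 ∧
      ‖Matrix.toEuclideanLin A z‖ ^ 2 ≤ (1 + δ) * ‖z‖ ^ 2)
    (T B : Finset (Fin N)) (hT : T.card ≤ 3 * K) (hB : B ⊆ T)
    (u : EuclideanSpace ℝ (Fin N)) (hu : suppIn T u) :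
    ‖proj B (u - Matrix.toEuclideanLin Aᵀ (Matrix.toEuclideanLin A u))‖ ≤ δ * ‖u‖ := by
  set L := Matrix.toEuclideanLin A
  set v := proj B (u - Matrix.toEuclideanLin Aᵀ (L u)) with hv
  have hvT : suppIn T v := suppIn_mono hB (suppIn_proj _ _)
  have hinner : ‖v‖ ^ 2 = (inner ℝ u v : ℝ) - inner ℝ (L u) (L v) := by
    have h1 : (inner ℝ v v : ℝ) = inner ℝ (u - Matrix.toEuclideanLin Aᵀ (L u)) v := by
      rw [hv]
      rw [inner_proj_left]
      rw [proj_eq_self (suppIn_proj B _)]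
    have h2 : (inner ℝ (u - Matrix.toEuclideanLin Aᵀ (L u)) v : ℝ)
        = inner ℝ u v - inner ℝ (Matrix.toEuclideanLin Aᵀ (L u)) v := by
      rw [inner_sub_left]
    have h3 : (inner ℝ (Matrix.toEuclideanLin Aᵀ (L u)) v : ℝ) = inner ℝ (L u) (L v) := by
      rw [real_inner_comm, ← IHT2.adj A v (L u), real_inner_comm]
    rw [← real_inner_self_eq_norm_sq, h1, h2, h3]
  have key := rip_inner (K := K) A δ hδ0 hRIP T hT u v hu hvT
  have h4 : ‖v‖ ^ 2 ≤ δ * ‖u‖ * ‖v‖ := by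
    calc ‖v‖ ^ 2 = (inner ℝ u v : ℝ) - inner ℝ (L u) (L v) := hinner
      _ ≤ |(inner ℝ u v : ℝ) - inner ℝ (L u) (L v)| := le_abs_self _
      _ ≤ δ * ‖u‖ * ‖v‖ := key
  rcases eq_or_lt_of_le (norm_nonneg v) with h | h
  · rw [← h]; positivity
  · have := (mul_le_mul_iff_left₀ h).mp (by nlinarith : ‖v‖ * ‖v‖ ≤ (δ * ‖u‖) * ‖v‖)
    exact this

lemma adj_norm_le (A : Matrix (Fin M) (Fin N) ℝ)
    (hnorm : ‖LinearMap.toContinuousLinearMap (Matrix.toEuclideanLin A)‖ < 1)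
    (w : EuclideanSpace ℝ (Fin M)) :
    ‖Matrix.toEuclideanLin Aᵀ w‖ ≤ ‖w‖ := by
  set L := Matrix.toEuclideanLin A
  set z := Matrix.toEuclideanLin Aᵀ w with hz
  have h1 : ‖z‖ ^ 2 = (inner ℝ (L z) w : ℝ) := by
    rw [← real_inner_self_eq_norm_sq, IHT2.adj A z w]
  have h2 : (inner ℝ (L z) w : ℝ) ≤ ‖L z‖ * ‖w‖ := real_inner_le_norm _ _
  have h3 : ‖L z‖ ≤ ‖LinearMap.toContinuousLinearMap L‖ * ‖z‖ := by
    have := (LinearMap.toContinuousLinearMap L).le_opNorm z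
    simpa using this
  have h4 : ‖L z‖ ≤ ‖z‖ := by
    nlinarith [norm_nonneg z, norm_nonneg (L z)]
  rcases eq_or_lt_of_le (norm_nonneg z) with h | h
  · rw [← h]; exact norm_nonneg w
  · nlinarith [norm_nonneg w]

end IHT3


set_option maxHeartbeats 1000000 in
open IHT IHT2 IHT3 in
open Matrix in
/-- IHT recovery guarantee under the RIP: if `b = Ax* + e` with `x*` `K`-sparse,
`‖A‖₂ < 1`, and `A` satisfies the RIP of order `3K` with constant `δ_{3K} < 1/√32`,
then the IHT iterates `x^{k+1} = H_K(x^k - Aᵀ(Ax^k - b))` started at `x^0 = 0` satisfy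
`‖x^k - x*‖ ≤ 2^{-k}‖x*‖ + 5‖e‖`. -/
theorem stmt18 {M N : ℕ} (K : ℕ) (A : Matrix (Fin M) (Fin N) ℝ)
    (xstar : EuclideanSpace ℝ (Fin N)) (e b : EuclideanSpace ℝ (Fin M))
    (hxs : sparse K xstar)
    (hb : b = Matrix.toEuclideanLin A xstar + e)
    (hnorm : ‖LinearMap.toContinuousLinearMap (Matrix.toEuclideanLin A)‖ < 1)
    (δ : ℝ) (hδ0 : 0 ≤ δ) (hδ : δ < 1 / Real.sqrt 32)
    (hRIP : ∀ z : EuclideanSpace ℝ (Fin N), sparse (3 * K) z →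
      (1 - δ) * ‖z‖ ^ 2 ≤ ‖Matrix.toEuclideanLin A z‖ ^ 2 ∧
      ‖Matrix.toEuclideanLin A z‖ ^ 2 ≤ (1 + δ) * ‖z‖ ^ 2)
    (x : ℕ → EuclideanSpace ℝ (Fin N)) (h0 : x 0 = 0)
    (hit : ∀ k, IsHT K
      (x k - Matrix.toEuclideanLin Aᵀ (Matrix.toEuclideanLin A (x k) - b))
      (x (k + 1))) :
    ∀ k : ℕ, ‖x k - xstar‖ ≤ ((2 : ℝ) ^ k)⁻¹ * ‖xstar‖ + 5 * ‖e‖ := by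
  classical
  have hsp : ∀ k, sparse K (x k) := by
    intro k
    cases k with
    | zero =>
      rw [h0]
      have : (Finset.univ.filter fun i => (0 : EuclideanSpace ℝ (Fin N)) i ≠ 0) = ∅ := by
        ext i; simp
      unfold sparse
      rw [this]
      simp
    | succ n => exact (hit n).1
  -- bound on δ
  have h32 : (4:ℝ) ≤ Real.sqrt 32 := by
    have h1 : Real.sqrt 16 ≤ Real.sqrt 32 := Real.sqrt_le_sqrt (by norm_num)
    have h16 : Real.sqrt 16 = 4 := by
      rw [show (16:ℝ) = 4^2 by norm_num, Real.sqrt_sq (by norm_num : (0:ℝ) ≤ 4)]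
    linarith
  have hδ4 : δ ≤ 1/4 := by
    have hpos : (0:ℝ) < Real.sqrt 32 := by linarith
    have : 1 / Real.sqrt 32 ≤ 1/4 := by
      rw [div_le_div_iff₀ hpos (by norm_num)]
      linarith
    linarith
  -- the key contraction step
  have step : ∀ k, ‖xstar - x (k+1)‖ ≤ (1/2) * ‖xstar - x k‖ + 2 * ‖e‖ := by
    intro k
    have hle := (hit k).2 xstar hxs
    set Sx := (Finset.univ.filter fun i => xstar i ≠ 0) with hSx
    set S1 := (Finset.univ.filter fun i => x (k+1) i ≠ 0) with hS1
    set Sk := (Finset.univ.filter fun i => x k i ≠ 0) with hSk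
    set B := Sx ∪ S1 with hB
    set T := B ∪ Sk with hT
    have hTcard : T.card ≤ 3 * K := by
      rw [hT, hB]
      have c1 := Finset.card_union_le (Sx ∪ S1) Sk
      have c2 := Finset.card_union_le Sx S1
      have h1 : Sx.card ≤ K := hxs
      have h2 : S1.card ≤ K := hsp (k+1)
      have h3 : Sk.card ≤ K := hsp k
      omega
    have hBT : B ⊆ T := Finset.subset_union_left
    have hxstarB : suppIn B xstar :=
      suppIn_mono Finset.subset_union_left (sparse_suppIn hxs)
    have hx1B : suppIn B (x (k+1)) :=
      suppIn_mono Finset.subset_union_right (sparse_suppIn (hsp (k+1)))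
    have hxstarT : suppIn T xstar := suppIn_mono hBT hxstarB
    have hxkT : suppIn T (x k) :=
      suppIn_mono Finset.subset_union_right (sparse_suppIn (hsp k))
    set a := x k - Matrix.toEuclideanLin Aᵀ (Matrix.toEuclideanLin A (x k) - b) with ha
    set r := xstar - x k with hr
    have hrT : suppIn T r := suppIn_sub hxstarT hxkT
    have haeq : xstar - a =
        (r - Matrix.toEuclideanLin Aᵀ (Matrix.toEuclideanLin A r)) -
          Matrix.toEuclideanLin Aᵀ e := by
      rw [ha, hb, hr]
      have h1 : Matrix.toEuclideanLin A (x k) - (Matrix.toEuclideanLin A xstar + e) =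
          -(Matrix.toEuclideanLin A (xstar - x k)) - e := by
        rw [map_sub]; abel
      rw [h1, map_sub, _root_.map_neg]
      abel
    -- step A : thresholding comparison restricted to B
    have hA : ‖proj B (x (k+1) - a)‖ ≤ ‖proj B (xstar - a)‖ := by
      have p1 := pyth B (x (k+1) - a)
      have p2 := pyth B (xstar - a)
      have t1 : proj B (x (k+1) - a) = x (k+1) - proj B a := by
        rw [proj_sub, proj_eq_self hx1B]
      have t2 : proj B (xstar - a) = xstar - proj B a := by
        rw [proj_sub, proj_eq_self hxstarB]
      have htail : (x (k+1) - a) - proj B (x (k+1) - a) = (xstar - a) - proj B (xstar - a) := by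
        rw [t1, t2]
        abel
      rw [htail] at p1
      have hsq : ‖proj B (x (k+1) - a)‖^2 ≤ ‖proj B (xstar - a)‖^2 := by
        nlinarith [norm_nonneg (x (k+1) - a), norm_nonneg (xstar - a), hle]
      nlinarith [norm_nonneg (proj B (x (k+1) - a)), norm_nonneg (proj B (xstar - a))]
    -- step B : distance bounded by 2 * projected residual
    have h5 : ‖xstar - x (k+1)‖ ≤ 2 * ‖proj B (xstar - a)‖ := by
      have heq : xstar - x (k+1) = proj B (xstar - x (k+1)) :=
        (proj_eq_self (suppIn_sub hxstarB hx1B)).symm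
      have hsplit : proj B (xstar - x (k+1)) = proj B (xstar - a) - proj B (x (k+1) - a) := by
        rw [← proj_sub]
        congr 1
        abel
      rw [heq, hsplit]
      calc ‖proj B (xstar - a) - proj B (x (k+1) - a)‖
          ≤ ‖proj B (xstar - a)‖ + ‖proj B (x (k+1) - a)‖ := norm_sub_le _ _
        _ ≤ 2 * ‖proj B (xstar - a)‖ := by linarith
    -- step C : bound the projected residual
    have h6 : ‖proj B (xstar - a)‖ ≤ δ * ‖r‖ + ‖e‖ := by
      rw [haeq, proj_sub]
      calc ‖proj B (r - Matrix.toEuclideanLin Aᵀ (Matrix.toEuclideanLin A r)) -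
              proj B (Matrix.toEuclideanLin Aᵀ e)‖
          ≤ ‖proj B (r - Matrix.toEuclideanLin Aᵀ (Matrix.toEuclideanLin A r))‖ +
              ‖proj B (Matrix.toEuclideanLin Aᵀ e)‖ := norm_sub_le _ _
        _ ≤ δ * ‖r‖ + ‖e‖ := by
            refine add_le_add ?_ ?_
            · exact rip_proj (K := K) A δ hδ0 hRIP T B hTcard hBT r hrT
            · exact le_trans (norm_proj_le _ _) (adj_norm_le A hnorm e)
    have hrnn : (0:ℝ) ≤ ‖r‖ := norm_nonneg r
    have : ‖xstar - x (k+1)‖ ≤ 2 * δ * ‖r‖ + 2 * ‖e‖ := by linarith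
    have h2δ : 2 * δ * ‖r‖ ≤ (1/2) * ‖r‖ := by nlinarith
    linarith
  -- conclude by induction
  intro k
  induction k with
  | zero =>
    rw [h0, zero_sub, norm_neg, pow_zero, inv_one, one_mul]
    have : (0:ℝ) ≤ 5 * ‖e‖ := by positivity
    linarith
  | succ n ih =>
    have hs := step n
    have e1 : ‖x (n+1) - xstar‖ = ‖xstar - x (n+1)‖ := norm_sub_rev _ _
    have e2 : ‖xstar - x n‖ = ‖x n - xstar‖ := norm_sub_rev _ _
    have hp : ((2:ℝ) ^ (n+1))⁻¹ = (1/2) * ((2:ℝ) ^ n)⁻¹ := by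
      rw [pow_succ, mul_inv]
      ring
    have hee : (0:ℝ) ≤ ‖e‖ := norm_nonneg e
    rw [e1, hp]
    linarith [hs, ih, e2, hee]
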